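/- Let W be an n×n row-stochastic nonnegative real matrix, Λ = diag(λ) with 0 ≤ λⁱ ≤ 1 for all i, and u ∈ ℝⁿ, and suppose ΛW is Schur stable, so the FJ system x_{t+1} = ΛW x_t + (I−Λ)u converges to x_∞ = (I − ΛW)⁻¹(I−Λ)u. Let (W_t), (Λ_t) be sequences of n×n real matrices with W_t → W and Λ_t → Λ entrywise as t → ∞, and let (u_t) be a sequence in ℝⁿ converging to u exponentially, i.e., there exist C > 0 and β ∈ (0,1) with ‖u_t − u‖ ≤ C β^t for all t. Then for every initial condition z₀ ∈ ℝⁿ, the time-varying system z_{t+1} = Λ_t W_t z_t + (I − Λ_t) u_t converges to x_∞. -/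

import Mathlib

open Filter Matrix Finset
open scoped ENNReal NNReal

attribute [local instance] Matrix.linftyOpNormedAddCommGroup Matrix.linftyOpNormedRing
  Matrix.linftyOpNormedAlgebra

/-- A square real matrix is Schur stable if every complex eigenvalue has modulus `< 1`. -/
def SchurStable {n : ℕ} (A : Matrix (Fin n) (Fin n) ℝ) : Prop :=
  ∀ μ ∈ spectrum ℂ (A.map (Complex.ofReal)), ‖μ‖ < 1

theorem aux_exists_pow_norm_lt_one {n : ℕ} (A : Matrix (Fin n) (Fin n) ℝ)
    (hschur : SchurStable A) :
    ∃ k ≥ 1, ‖A ^ k‖ < 1 := by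
  set B := A.map (Complex.ofReal) with hB
  have hfin : (spectrum ℂ B).Finite := Matrix.finite_spectrum B
  have hrad : spectralRadius ℂ B < 1 := by
    rw [spectralRadius]
    calc ⨆ μ ∈ spectrum ℂ B, (‖μ‖₊ : ℝ≥0∞)
        ≤ ((hfin.toFinset.sup fun μ => ‖μ‖₊ : ℝ≥0) : ℝ≥0∞) := by
          refine iSup₂_le fun μ hμ => ?_
          exact_mod_cast ENNReal.coe_le_coe.2 (Finset.le_sup (hfin.mem_toFinset.2 hμ))
      _ < 1 := by
          rw [show (1:ℝ≥0∞) = ((1:ℝ≥0):ℝ≥0∞) by simp, ENNReal.coe_lt_coe]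
          refine Finset.sup_lt_iff (by norm_num) |>.2 fun μ hμ => ?_
          have := hschur μ (hfin.mem_toFinset.1 hμ)
          rwa [← NNReal.coe_lt_one, coe_nnnorm]
  have hgel := spectrum.pow_nnnorm_pow_one_div_tendsto_nhds_spectralRadius B
  have hev : ∀ᶠ (k : ℕ) in atTop, (‖B ^ k‖₊ : ℝ≥0∞) ^ (1 / (k:ℝ)) < 1 :=
    hgel.eventually_lt_const hrad
  obtain ⟨k, hklt, hk1⟩ := (hev.and (eventually_ge_atTop 1)).exists
  refine ⟨k, hk1, ?_⟩
  have hknorm : (‖B ^ k‖₊ : ℝ≥0∞) < 1 := by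
    by_contra h
    push_neg at h
    have h2 : (1:ℝ≥0∞) = (1:ℝ≥0∞) ^ (1/(k:ℝ)) := by rw [ENNReal.one_rpow]
    have : (1:ℝ≥0∞) ^ (1/(k:ℝ)) ≤ (‖B ^ k‖₊ : ℝ≥0∞) ^ (1 / (k:ℝ)) :=
      ENNReal.rpow_le_rpow h (by positivity)
    rw [← h2] at this
    exact absurd hklt (not_lt.2 this)
  have hmap : B ^ k = (A ^ k).map (Complex.ofReal) := by
    rw [hB]; exact (map_pow (Complex.ofRealHom.mapMatrix) A k).symm
  have hnn : ‖A ^ k‖₊ = ‖B ^ k‖₊ := by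
    rw [hmap, Matrix.linfty_opNNNorm_def, Matrix.linfty_opNNNorm_def]
    congr 1
    ext i
    congr 1
    ext j
    simp [Matrix.map_apply]
  have : ‖A ^ k‖₊ < 1 := by rw [hnn]; exact_mod_cast hknorm
  exact_mod_cast this

theorem aux_tendsto_zero_of_linear_rec {a ε : ℕ → ℝ} {r : ℝ} (hr0 : 0 ≤ r) (hr1 : r < 1)
    (ha : ∀ t, 0 ≤ a t) (hε : Tendsto ε atTop (nhds 0))
    (hrec : ∀ᶠ t in atTop, a (t + 1) ≤ r * a t + ε t) :
    Tendsto a atTop (nhds 0) := by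
  rw [Metric.tendsto_atTop]
  intro δ hδ
  have h1r : 0 < 1 - r := by linarith
  have hδ2 : (0:ℝ) < (1 - r) * (δ/2) := by positivity
  have hεev : ∀ᶠ t in atTop, ε t < (1 - r) * (δ/2) := hε.eventually_lt_const hδ2
  obtain ⟨T, hT⟩ := (hrec.and hεev).exists_forall_of_atTop
  have key : ∀ m, a (T + m) ≤ r ^ m * a T + δ/2 := by
    intro m
    induction m with
    | zero => simp [le_of_lt hδ]; nlinarith [ha T]
    | succ m ih =>
      have h1 := (hT (T + m) (by omega)).1
      have h2 := (hT (T + m) (by omega)).2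
      calc a (T + (m+1)) = a ((T + m) + 1) := by ring_nf
        _ ≤ r * a (T + m) + ε (T + m) := h1
        _ ≤ r * (r ^ m * a T + δ/2) + (1 - r) * (δ/2) := by
            have := mul_le_mul_of_nonneg_left ih hr0
            linarith [h2]
        _ = r ^ (m+1) * a T + δ/2 := by ring
  have hpow : Tendsto (fun m => r ^ m * a T) atTop (nhds 0) := by
    simpa using (tendsto_pow_atTop_nhds_zero_of_lt_one hr0 hr1).mul_const (a T)
  obtain ⟨M, hM⟩ := (Metric.tendsto_atTop.1 hpow _ (half_pos hδ)).imp (fun M h => h M le_rfl)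
  refine ⟨T + M, fun t ht => ?_⟩
  have hm : t = T + (t - T) := by omega
  have hmono : r ^ (t - T) * a T ≤ r ^ M * a T :=
    mul_le_mul_of_nonneg_right (pow_le_pow_of_le_one hr0 hr1.le (by omega)) (ha T)
  have hMd : r ^ M * a T < δ/2 := by
    rw [Real.dist_eq, sub_zero] at hM
    calc r ^ M * a T ≤ |r ^ M * a T| := le_abs_self _
      _ < δ/2 := hM
  rw [Real.dist_eq, sub_zero, abs_of_nonneg (ha t)]
  calc a t = a (T + (t - T)) := by rw [← hm]
    _ ≤ r ^ (t - T) * a T + δ/2 := key _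
    _ ≤ r ^ M * a T + δ/2 := by linarith
    _ < δ := by linarith

theorem aux_matrix_norm_le {n : ℕ} (M : Matrix (Fin n) (Fin n) ℝ) :
    ‖M‖ ≤ ∑ i, ∑ j, ‖M i j‖ := by
  have : ‖M‖₊ ≤ ∑ i, ∑ j, ‖M i j‖₊ := by
    rw [Matrix.linfty_opNNNorm_def]
    exact Finset.sup_le fun i _ =>
      Finset.single_le_sum (f := fun i => ∑ j, ‖M i j‖₊) (fun _ _ => zero_le) (mem_univ i)
  calc ‖M‖ = ((‖M‖₊ : ℝ≥0) : ℝ) := (coe_nnnorm M).symm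
    _ ≤ ((∑ i, ∑ j, ‖M i j‖₊ : ℝ≥0) : ℝ) := by exact_mod_cast this
    _ = ∑ i, ∑ j, ‖M i j‖ := by push_cast; rfl

theorem aux_pi_norm_le {n : ℕ} (v : Fin n → ℝ) : ‖v‖ ≤ ∑ i, ‖v i‖ := by
  have : ‖v‖₊ ≤ ∑ i, ‖v i‖₊ := by
    rw [Pi.nnnorm_def]
    exact Finset.sup_le fun i _ =>
      Finset.single_le_sum (f := fun i => ‖v i‖₊) (fun _ _ => zero_le) (mem_univ i)
  calc ‖v‖ = ((‖v‖₊ : ℝ≥0) : ℝ) := (coe_nnnorm v).symm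
    _ ≤ ((∑ i, ‖v i‖₊ : ℝ≥0) : ℝ) := by exact_mod_cast this
    _ = ∑ i, ‖v i‖ := by push_cast; rfl

set_option maxHeartbeats 1000000 in
/-- Stability of the Friedkin-Johnsen system is preserved when the influence structure,
susceptibilities and external biases become time-varying sequences converging to the original
parameters (the biases converging exponentially): the perturbed system converges to the same
limit `x_∞ = (I - ΛW)⁻¹ (I - Λ) u` for every initial condition. -/
theorem fj_time_varying_stability {n : ℕ}
    (W : Matrix (Fin n) (Fin n) ℝ) (lam : Fin n → ℝ) (u : Fin n → ℝ)
    (hW0 : ∀ i j, 0 ≤ W i j) (hW1 : ∀ i, ∑ j, W i j = 1)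
    (hlam : ∀ i, 0 ≤ lam i ∧ lam i ≤ 1)
    (hschur : SchurStable (Matrix.diagonal lam * W))
    (Wt Λt : ℕ → Matrix (Fin n) (Fin n) ℝ) (ut : ℕ → Fin n → ℝ)
    (hWt : ∀ i j, Tendsto (fun t => Wt t i j) atTop (nhds (W i j)))
    (hΛt : ∀ i j, Tendsto (fun t => Λt t i j) atTop (nhds ((Matrix.diagonal lam) i j)))
    (hut : ∃ C > (0 : ℝ), ∃ β ∈ Set.Ioo (0 : ℝ) 1,
      ∀ t, Real.sqrt (∑ i, (ut t i - u i) ^ 2) ≤ C * β ^ t)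
    (z : ℕ → Fin n → ℝ)
    (hz : ∀ t, z (t + 1) = (Λt t * Wt t) *ᵥ z t + (1 - Λt t) *ᵥ ut t) :
    Tendsto z atTop
      (nhds ((1 - Matrix.diagonal lam * W)⁻¹ *ᵥ ((1 - Matrix.diagonal lam) *ᵥ u))) := by
  classical
  set A := Matrix.diagonal lam * W with hA
  set b : Fin n → ℝ := (1 - Matrix.diagonal lam) *ᵥ u with hb
  set x : Fin n → ℝ := (1 - A)⁻¹ *ᵥ b with hx
  -- invertibility of 1 - A
  have hdet : IsUnit (1 - A).det := by
    rw [isUnit_iff_ne_zero]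
    intro hdet0
    have hmapsub : (1 - A).map (Complex.ofReal) =
        1 - A.map (Complex.ofReal) := by
      have := map_sub (Complex.ofRealHom.mapMatrix) (1 : Matrix (Fin n) (Fin n) ℝ) A
      simp at this; exact this
    have h1 : (1:ℂ) ∈ spectrum ℂ (A.map Complex.ofReal) := by
      rw [spectrum.mem_iff]
      intro hu
      rw [Matrix.isUnit_iff_isUnit_det] at hu
      have hdetc : (1 - A.map Complex.ofReal).det = 0 := by
        rw [← hmapsub,
          show ((1 - A).map (Complex.ofReal)) =
            (Complex.ofRealHom : ℝ →+* ℂ).mapMatrix (1 - A) from rfl,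
          ← RingHom.map_det, hdet0]
        simp
      rw [isUnit_iff_ne_zero] at hu
      have heq : (algebraMap ℂ (Matrix (Fin n) (Fin n) ℂ)) 1 - A.map Complex.ofReal =
          1 - A.map Complex.ofReal := by simp
      rw [heq] at hu
      exact hu hdetc
    have := hschur 1 h1
    simp at this
  -- fixed point
  have hfix : x = A *ᵥ x + b := by
    have h1 : (1 - A) *ᵥ x = b := by
      rw [hx, Matrix.mulVec_mulVec, Matrix.mul_nonsing_inv _ hdet, Matrix.one_mulVec]
    rw [Matrix.sub_mulVec, Matrix.one_mulVec] at h1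
    rw [← h1]
    abel
  -- adapted norm
  obtain ⟨k, hk1, hAk⟩ := aux_exists_pow_norm_lt_one A hschur
  have hk0 : 0 < k := hk1
  set r : ℝ := max (‖A ^ k‖ ^ (1/(k:ℝ))) (1/2) with hrdef
  have hr0 : 0 < r := lt_of_lt_of_le (by norm_num) (le_max_right _ _)
  have hr1 : r < 1 := max_lt (Real.rpow_lt_one (norm_nonneg _) hAk (by positivity)) (by norm_num)
  have hrk : ‖A ^ k‖ ≤ r ^ k := by
    have hkne : (k:ℝ) ≠ 0 := Nat.cast_ne_zero.2 hk0.ne'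
    have h0 : (‖A ^ k‖ ^ (1/(k:ℝ))) ^ k = ‖A ^ k‖ := by
      rw [← Real.rpow_natCast (‖A ^ k‖ ^ (1/(k:ℝ))) k, ← Real.rpow_mul (norm_nonneg _),
        one_div, inv_mul_cancel₀ hkne, Real.rpow_one]
    calc ‖A ^ k‖ = (‖A ^ k‖ ^ (1/(k:ℝ))) ^ k := h0.symm
      _ ≤ r ^ k := pow_le_pow_left₀ (Real.rpow_nonneg (norm_nonneg _) _) (le_max_left _ _) k
  set ν : (Fin n → ℝ) → ℝ := fun v => ∑ j ∈ Finset.range k, ‖(A ^ j) *ᵥ v‖ / r ^ j with hν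
  have hν0 : ∀ v, 0 ≤ ν v := fun v =>
    Finset.sum_nonneg fun j _ => div_nonneg (norm_nonneg _) (pow_nonneg hr0.le _)
  have hνge : ∀ v, ‖v‖ ≤ ν v := by
    intro v
    have := Finset.single_le_sum (f := fun j => ‖(A ^ j) *ᵥ v‖ / r ^ j)
      (fun j _ => div_nonneg (norm_nonneg _) (pow_nonneg hr0.le _))
      (Finset.mem_range.2 hk0)
    simpa [Matrix.one_mulVec] using this
  set D : ℝ := (∑ j ∈ Finset.range k, ‖A ^ j‖ / r ^ j) + 1 with hD
  have hDsum : 0 ≤ ∑ j ∈ Finset.range k, ‖A ^ j‖ / r ^ j :=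
    Finset.sum_nonneg fun j _ => div_nonneg (norm_nonneg _) (pow_nonneg hr0.le _)
  have hD0 : 0 < D := by rw [hD]; linarith
  have hνle : ∀ v, ν v ≤ D * ‖v‖ := by
    intro v
    have h1 : ν v ≤ ∑ j ∈ Finset.range k, (‖A ^ j‖ / r ^ j) * ‖v‖ := by
      refine Finset.sum_le_sum fun j _ => ?_
      rw [div_mul_eq_mul_div]
      gcongr
      exact Matrix.linfty_opNorm_mulVec _ _
    calc ν v ≤ ∑ j ∈ Finset.range k, (‖A ^ j‖ / r ^ j) * ‖v‖ := h1
      _ = (∑ j ∈ Finset.range k, ‖A ^ j‖ / r ^ j) * ‖v‖ := (Finset.sum_mul _ _ _).symm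
      _ ≤ D * ‖v‖ := by
          refine mul_le_mul_of_nonneg_right ?_ (norm_nonneg _)
          rw [hD]; linarith
  have hνadd : ∀ v w, ν (v + w) ≤ ν v + ν w := by
    intro v w
    rw [hν]
    simp only
    rw [← Finset.sum_add_distrib]
    refine Finset.sum_le_sum fun j _ => ?_
    rw [← add_div]
    gcongr
    rw [Matrix.mulVec_add]
    exact norm_add_le _ _
  have hνA : ∀ v, ν (A *ᵥ v) ≤ r * ν v := by
    intro v
    set f : ℕ → ℝ := fun j => ‖(A ^ j) *ᵥ v‖ / r ^ j with hf
    have hshift : ν (A *ᵥ v) = r * ∑ j ∈ Finset.range k, f (j+1) := by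
      rw [hν, Finset.mul_sum]
      refine Finset.sum_congr rfl fun j hj => ?_
      rw [Matrix.mulVec_mulVec, ← pow_succ]
      rw [hf]
      simp only
      rw [pow_succ]
      field_simp
      ring
  -- ∑_{j<k} f (j+1) = ν v + f k - f 0
    have hsum : ∑ j ∈ Finset.range k, f (j+1) = ν v + f k - f 0 := by
      have h1 := Finset.sum_range_succ' f k
      have h2 := Finset.sum_range_succ f k
      have h3 : ν v = ∑ j ∈ Finset.range k, f j := rfl
      linarith
    have hf0 : f 0 = ‖v‖ := by simp [hf, Matrix.one_mulVec]
    have hfk : f k ≤ f 0 := by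
      rw [hf0, hf]
      simp only
      rw [div_le_iff₀ (pow_pos hr0 k)]
      calc ‖(A ^ k) *ᵥ v‖ ≤ ‖A ^ k‖ * ‖v‖ := Matrix.linfty_opNorm_mulVec _ _
        _ ≤ r ^ k * ‖v‖ := mul_le_mul_of_nonneg_right hrk (norm_nonneg _)
        _ = ‖v‖ * r ^ k := mul_comm _ _
    calc ν (A *ᵥ v) = r * ∑ j ∈ Finset.range k, f (j+1) := hshift
      _ ≤ r * ν v := by
          refine mul_le_mul_of_nonneg_left ?_ hr0.le
          rw [hsum]; linarith
  -- coordinatewise convergence of ut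
  have hcoord_u : ∀ i, Tendsto (fun t => ut t i) atTop (nhds (u i)) := by
    obtain ⟨C, hC, β, hβ, hbound⟩ := hut
    intro i
    have h1 : ∀ t, |ut t i - u i| ≤ C * β ^ t := by
      intro t
      rw [← Real.sqrt_sq_eq_abs]
      refine le_trans (Real.sqrt_le_sqrt ?_) (hbound t)
      exact Finset.single_le_sum (f := fun i => (ut t i - u i)^2)
        (fun _ _ => sq_nonneg _) (mem_univ i)
    have h3 : Tendsto (fun t => C * β ^ t) atTop (nhds 0) := by
      simpa using (tendsto_pow_atTop_nhds_zero_of_lt_one hβ.1.le hβ.2).const_mul C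
    have h4 : Tendsto (fun t => ut t i - u i) atTop (nhds 0) :=
      squeeze_zero_norm h1 h3
    have := h4.add_const (u i)
    simpa using this
  -- convergence of matrices in norm
  have hAt_entry : ∀ i j, Tendsto (fun t => (Λt t * Wt t) i j) atTop (nhds (A i j)) := by
    intro i j
    have hAij : A i j = ∑ l, Matrix.diagonal lam i l * W l j := by
      rw [hA, Matrix.mul_apply]
    rw [hAij]
    simp only [Matrix.mul_apply]
    exact tendsto_finset_sum _ fun l _ => (hΛt i l).mul (hWt l j)
  have hAtn : Tendsto (fun t => ‖Λt t * Wt t - A‖) atTop (nhds 0) := by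
    have hentry : ∀ i j, Tendsto (fun t => ‖(Λt t * Wt t - A) i j‖) atTop (nhds 0) := by
      intro i j
      have h1 := (hAt_entry i j).sub (tendsto_const_nhds (x := A i j))
      rw [sub_self] at h1
      have h2 := h1.norm
      rw [norm_zero] at h2
      simpa [Matrix.sub_apply] using h2
    have hsum : Tendsto (fun t => ∑ i, ∑ j, ‖(Λt t * Wt t - A) i j‖) atTop (nhds 0) := by
      have := tendsto_finset_sum (univ : Finset (Fin n))
        (fun i _ => tendsto_finset_sum (univ : Finset (Fin n)) (fun j _ => hentry i j))
      simpa using this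
    exact squeeze_zero (fun t => norm_nonneg _) (fun t => aux_matrix_norm_le _) hsum
  -- convergence of bias in norm
  have hbtn : Tendsto (fun t => ‖(1 - Λt t) *ᵥ ut t - b‖) atTop (nhds 0) := by
    have hentry : ∀ i, Tendsto (fun t => ‖((1 - Λt t) *ᵥ ut t - b : Fin n → ℝ) i‖) atTop (nhds 0) := by
      intro i
      have hbi : b i = ∑ j, ((1 : Matrix (Fin n) (Fin n) ℝ) i j - Matrix.diagonal lam i j) * u j := by
        rw [hb]
        simp [Matrix.mulVec, dotProduct, Matrix.sub_apply]
      have h1 : Tendsto (fun t => ((1 - Λt t) *ᵥ ut t) i) atTop (nhds (b i)) := by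
        rw [hbi]
        simp only [Matrix.mulVec, dotProduct, Matrix.sub_apply]
        exact tendsto_finset_sum _ fun j _ =>
          ((tendsto_const_nhds).sub (hΛt i j)).mul (hcoord_u j)
      have h2 := (h1.sub (tendsto_const_nhds (x := b i)))
      rw [sub_self] at h2
      have h3 := h2.norm
      rw [norm_zero] at h3
      simpa [Pi.sub_apply] using h3
    have hsum : Tendsto (fun t => ∑ i, ‖((1 - Λt t) *ᵥ ut t - b : Fin n → ℝ) i‖) atTop (nhds 0) := by
      have := tendsto_finset_sum (univ : Finset (Fin n)) (fun i _ => hentry i)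
      simpa using this
    exact squeeze_zero (fun t => norm_nonneg _) (fun t => aux_pi_norm_le _) hsum
  -- the error recursion
  set a : ℕ → ℝ := fun t => ν (z t - x) with ha
  set ε : ℕ → ℝ := fun t => D * (‖Λt t * Wt t - A‖ * ‖x‖ + ‖(1 - Λt t) *ᵥ ut t - b‖) with hε
  have hεt : Tendsto ε atTop (nhds 0) := by
    have := ((hAtn.mul_const ‖x‖).add hbtn).const_mul D
    simpa using this
  set r' : ℝ := (1 + r)/2 with hr'
  have hr'0 : 0 ≤ r' := by rw [hr']; linarith
  have hr'1 : r' < 1 := by rw [hr']; linarith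
  have hevsmall : ∀ᶠ t in atTop, D * ‖Λt t * Wt t - A‖ ≤ (1 - r)/2 := by
    have h1 : Tendsto (fun t => D * ‖Λt t * Wt t - A‖) atTop (nhds 0) := by
      simpa using hAtn.const_mul D
    have h2 := h1.eventually_lt_const (show (0:ℝ) < (1 - r)/2 by linarith)
    filter_upwards [h2] with t ht using ht.le
  have hrec : ∀ᶠ t in atTop, a (t+1) ≤ r' * a t + ε t := by
    filter_upwards [hevsmall] with t hsm
    have he : z (t+1) - x = (Λt t * Wt t) *ᵥ (z t - x) +
        ((Λt t * Wt t - A) *ᵥ x + ((1 - Λt t) *ᵥ ut t - b)) := by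
      have hsub : (Λt t * Wt t - A) *ᵥ x = (Λt t * Wt t) *ᵥ x - A *ᵥ x :=
        Matrix.sub_mulVec _ _ _
      rw [hz t, Matrix.mulVec_sub, hsub]
      conv_lhs => rw [hfix]
      abel
    have h1 : a (t+1) ≤ ν ((Λt t * Wt t) *ᵥ (z t - x)) +
        ν ((Λt t * Wt t - A) *ᵥ x + ((1 - Λt t) *ᵥ ut t - b)) := by
      rw [show a (t+1) = ν (z (t+1) - x) from rfl, he]
      exact hνadd _ _
    have h2 : ν ((Λt t * Wt t) *ᵥ (z t - x)) ≤ r * a t + (D * ‖Λt t * Wt t - A‖) * a t := by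
      have hsplit : (Λt t * Wt t) *ᵥ (z t - x) =
          A *ᵥ (z t - x) + (Λt t * Wt t - A) *ᵥ (z t - x) := by
        rw [Matrix.sub_mulVec]; abel
      calc ν ((Λt t * Wt t) *ᵥ (z t - x))
          ≤ ν (A *ᵥ (z t - x)) + ν ((Λt t * Wt t - A) *ᵥ (z t - x)) := by
            rw [hsplit]; exact hνadd _ _
        _ ≤ r * a t + D * ‖(Λt t * Wt t - A) *ᵥ (z t - x)‖ :=
            add_le_add (hνA _) (hνle _)
        _ ≤ r * a t + D * (‖Λt t * Wt t - A‖ * ‖z t - x‖) := by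
            gcongr
            exact Matrix.linfty_opNorm_mulVec _ _
        _ ≤ r * a t + (D * ‖Λt t * Wt t - A‖) * a t := by
            rw [← mul_assoc]
            exact add_le_add (le_refl _) (mul_le_mul_of_nonneg_left (hνge (z t - x))
              (mul_nonneg hD0.le (norm_nonneg _)))
    have h3 : ν ((Λt t * Wt t - A) *ᵥ x + ((1 - Λt t) *ᵥ ut t - b)) ≤ ε t := by
      calc ν ((Λt t * Wt t - A) *ᵥ x + ((1 - Λt t) *ᵥ ut t - b))
          ≤ ν ((Λt t * Wt t - A) *ᵥ x) + ν ((1 - Λt t) *ᵥ ut t - b) := hνadd _ _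
        _ ≤ D * ‖(Λt t * Wt t - A) *ᵥ x‖ + D * ‖(1 - Λt t) *ᵥ ut t - b‖ :=
            add_le_add (hνle _) (hνle _)
        _ ≤ D * (‖Λt t * Wt t - A‖ * ‖x‖) + D * ‖(1 - Λt t) *ᵥ ut t - b‖ := by
            gcongr
            exact Matrix.linfty_opNorm_mulVec _ _
        _ = ε t := by rw [hε]; ring
    have h4 : (D * ‖Λt t * Wt t - A‖) * a t ≤ (1 - r)/2 * a t :=
      mul_le_mul_of_nonneg_right hsm (hν0 _)
    have hreq : r * a t + (1 - r)/2 * a t = r' * a t := by rw [hr']; ring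
    calc a (t+1) ≤ ν ((Λt t * Wt t) *ᵥ (z t - x)) +
        ν ((Λt t * Wt t - A) *ᵥ x + ((1 - Λt t) *ᵥ ut t - b)) := h1
      _ ≤ (r * a t + D * ‖Λt t * Wt t - A‖ * a t) + ε t := add_le_add h2 h3
      _ ≤ (r * a t + (1 - r)/2 * a t) + ε t := by linarith [h4]
      _ = r' * a t + ε t := by rw [hreq]
  have hconv : Tendsto a atTop (nhds 0) :=
    aux_tendsto_zero_of_linear_rec hr'0 hr'1 (fun t => hν0 _) hεt hrec
  have hnorm : Tendsto (fun t => ‖z t - x‖) atTop (nhds 0) :=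
    squeeze_zero (fun t => norm_nonneg _) (fun t => hνge _) hconv
  exact tendsto_iff_norm_sub_tendsto_zero.2 hnorm
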